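/- Let M ⊆ ℝ^n × ℝ^m be a nonempty affine subspace. Then there exist a vector subspace D ⊆ ℝ^m and an affine map g : ℝ^n → ℝ^m with g(x) ∈ D^⊥ for all x, such that for every x ∈ ℝ^n, the fiber M_x = { y ∈ ℝ^m : (x,y) ∈ M } satisfies: if M_x is nonempty then M_x = { g(x) + d : d ∈ D }. -/

import Mathlib

open Matrix

/-- Let `M ⊆ ℝⁿ × ℝᵐ` be a nonempty affine subspace. Then there exist a vector subspace
`D ⊆ ℝᵐ` and an affine map `g x = B x + v` with values orthogonal to `D`, such that every
nonempty fiber `M_x = { y : (x,y) ∈ M }` equals `g x + D`. -/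
theorem affine_fibers_eq_affine_map_add_subspace {n m : ℕ}
    (M : AffineSubspace ℝ ((Fin n → ℝ) × (Fin m → ℝ)))
    (hM : (M : Set ((Fin n → ℝ) × (Fin m → ℝ))).Nonempty) :
    ∃ (D : Submodule ℝ (Fin m → ℝ)) (B : Matrix (Fin m) (Fin n) ℝ) (v : Fin m → ℝ),
      (∀ x : Fin n → ℝ, ∀ d ∈ D, (B.mulVec x + v) ⬝ᵥ d = 0) ∧
      ∀ x : Fin n → ℝ, {y : Fin m → ℝ | (x, y) ∈ M}.Nonempty →
        {y : Fin m → ℝ | (x, y) ∈ M} =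
          {y : Fin m → ℝ | ∃ d ∈ D, y = B.mulVec x + v + d} := by
  obtain ⟨⟨x₀, y₀⟩, hp⟩ := hM
  set W := M.direction with hWdef
  set D : Submodule ℝ (Fin m → ℝ) :=
    W.comap (LinearMap.inr ℝ (Fin n → ℝ) (Fin m → ℝ)) with hDdef
  have hDmem : ∀ d : Fin m → ℝ, d ∈ D ↔ ((0 : Fin n → ℝ), d) ∈ W := fun d => Iff.rfl
  -- splitting of the first projection restricted to W
  set f : W →ₗ[ℝ] (Fin n → ℝ) :=
    (LinearMap.fst ℝ (Fin n → ℝ) (Fin m → ℝ)).comp W.subtype with hfdef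
  set U := LinearMap.range f with hUdef
  obtain ⟨σ, hσ⟩ := LinearMap.exists_rightInverse_of_surjective f.rangeRestrict
    (LinearMap.range_rangeRestrict f)
  obtain ⟨C, hC⟩ := Submodule.exists_isCompl U
  set r : (Fin n → ℝ) →ₗ[ℝ] U := U.linearProjOfIsCompl C hC with hrdef
  set h : (Fin n → ℝ) →ₗ[ℝ] (Fin m → ℝ) :=
    ((LinearMap.snd ℝ (Fin n → ℝ) (Fin m → ℝ)).comp W.subtype).comp (σ.comp r) with hhdef
  have key : ∀ u : Fin n → ℝ, u ∈ U → ((u, h u) : (Fin n → ℝ) × (Fin m → ℝ)) ∈ W := by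
    intro u hu
    have h1 : r u = ⟨u, hu⟩ := Submodule.linearProjOfIsCompl_apply_left hC ⟨u, hu⟩
    have h2 : f.rangeRestrict (σ ⟨u, hu⟩) = ⟨u, hu⟩ := by
      have := congrArg (fun g => g (⟨u, hu⟩ : U)) hσ
      exact this
    have h3 : ((σ ⟨u, hu⟩ : W) : (Fin n → ℝ) × (Fin m → ℝ)).1 = u := by
      have := congrArg Subtype.val h2
      simpa [LinearMap.rangeRestrict, hfdef] using this
    have h4 : h u = ((σ ⟨u, hu⟩ : W) : (Fin n → ℝ) × (Fin m → ℝ)).2 := by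
      simp [hhdef, h1]
    have : ((u, h u) : (Fin n → ℝ) × (Fin m → ℝ))
        = ((σ ⟨u, hu⟩ : W) : (Fin n → ℝ) × (Fin m → ℝ)) := by
      rw [h4]; exact Prod.ext h3.symm rfl
    rw [this]
    exact (σ ⟨u, hu⟩ : W).2
  -- orthogonal projection onto Dᗮ in Euclidean space
  set eqm := WithLp.linearEquiv 2 ℝ (Fin m → ℝ) with heqm
  set D' : Submodule ℝ (EuclideanSpace ℝ (Fin m)) := D.comap eqm.toLinearMap with hD'
  have hcompl : IsCompl D'ᗮ D' := Submodule.isCompl_orthogonal_of_hasOrthogonalProjection.symm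
  set q : EuclideanSpace ℝ (Fin m) →ₗ[ℝ] EuclideanSpace ℝ (Fin m) :=
    D'ᗮ.subtype ∘ₗ D'ᗮ.linearProjOfIsCompl D' hcompl with hqdef
  have qmem : ∀ z, q z ∈ D'ᗮ := fun z => (D'ᗮ.linearProjOfIsCompl D' hcompl z).2
  have qsub : ∀ z, z - q z ∈ D' := by
    intro z
    have := Submodule.projection_add_projection_eq_self hcompl z
    have hz : z - q z = (D'.linearProjOfIsCompl D'ᗮ hcompl.symm z : EuclideanSpace ℝ (Fin m)) := by
      rw [eq_comm, eq_sub_iff_add_eq, add_comm]; exact this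
    rw [hz]
    exact (D'.linearProjOfIsCompl D'ᗮ hcompl.symm z).2
  set Q : (Fin m → ℝ) →ₗ[ℝ] (Fin m → ℝ) :=
    eqm.toLinearMap ∘ₗ q ∘ₗ eqm.symm.toLinearMap with hQdef
  have Qorth : ∀ y : Fin m → ℝ, ∀ d ∈ D, (Q y) ⬝ᵥ d = 0 := by
    intro y d hd
    have hd' : (eqm.symm d : EuclideanSpace ℝ (Fin m)) ∈ D' := by
      simp [hD', Submodule.mem_comap, hd]
    have hz := qmem (eqm.symm y)
    have h0 : (inner ℝ (eqm.symm d) (q (eqm.symm y)) : ℝ) = 0 :=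
      (Submodule.mem_orthogonal _ _).mp hz _ hd'
    rw [PiLp.inner_apply] at h0
    simp only [RCLike.inner_apply, starRingEnd_apply, star_trivial] at h0
    have : (Q y) ⬝ᵥ d = ∑ i, (eqm.symm d : EuclideanSpace ℝ (Fin m)) i * q (eqm.symm y) i := by
      simp only [dotProduct, hQdef, LinearMap.comp_apply, LinearEquiv.coe_coe]
      exact Finset.sum_congr rfl fun i _ => mul_comm _ _
    rw [this, ← h0]; exact Finset.sum_congr rfl fun i _ => mul_comm _ _
  have Qsub : ∀ y : Fin m → ℝ, y - Q y ∈ D := by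
    intro y
    have := qsub (eqm.symm y)
    have h1 : eqm ((eqm.symm y) - q (eqm.symm y)) ∈ D := this
    simpa [hQdef, map_sub] using h1
  -- the affine map
  set L : (Fin n → ℝ) →ₗ[ℝ] (Fin m → ℝ) := Q ∘ₗ h with hLdef
  refine ⟨D, LinearMap.toMatrix' L, Q (y₀ - h x₀), ?_, ?_⟩ <;>
    [skip; skip]
  case _ =>
    intro x d hd
    have hmv : (LinearMap.toMatrix' L).mulVec x = L x := by
      rw [← Matrix.toLin'_apply, Matrix.toLin'_toMatrix']
    rw [hmv]
    have : L x + Q (y₀ - h x₀) = Q (h x + (y₀ - h x₀)) := by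
      simp [hLdef, map_add]
    rw [this]
    exact Qorth _ d hd
  case _ =>
    intro x ⟨y₁, hy₁⟩
    have hmv : (LinearMap.toMatrix' L).mulVec x = L x := by
      rw [← Matrix.toLin'_apply, Matrix.toLin'_toMatrix']
    -- x - x₀ ∈ U
    have hw1 : ((x, y₁) : (Fin n → ℝ) × (Fin m → ℝ)) -ᵥ (x₀, y₀) ∈ W :=
      AffineSubspace.vsub_mem_direction hy₁ hp
    have hw1' : ((x - x₀, y₁ - y₀) : (Fin n → ℝ) × (Fin m → ℝ)) ∈ W := hw1
    have hu : x - x₀ ∈ U := ⟨⟨(x - x₀, y₁ - y₀), hw1'⟩, rfl⟩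
    set u : Fin n → ℝ := x - x₀ with hu'
    set w : Fin m → ℝ := y₀ + h u with hwdef
    have hkey := key u hu
    have memiff : ∀ y : Fin m → ℝ, (x, y) ∈ M ↔ y - w ∈ D := by
      intro y
      rw [← AffineSubspace.vsub_right_mem_direction_iff_mem hp (x, y)]
      have e1 : ((x, y) : (Fin n → ℝ) × (Fin m → ℝ)) -ᵥ (x₀, y₀) = (u, y - y₀) := rfl
      rw [e1, ← Submodule.sub_mem_iff_left W hkey]
      have e2 : ((u, y - y₀) : (Fin n → ℝ) × (Fin m → ℝ)) - (u, h u) = (0, y - w) := by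
        rw [Prod.mk_sub_mk, hwdef]
        congr 1
        · abel
        · abel
      rw [e2]
      exact (hDmem _).symm
    have hQw : (LinearMap.toMatrix' L).mulVec x + Q (y₀ - h x₀) = Q w := by
      rw [hmv, hwdef]
      have : h u = h x - h x₀ := by rw [hu', map_sub]
      rw [this]
      simp only [hLdef, LinearMap.comp_apply, ← map_add]
      congr 1
      abel
    ext y
    simp only [Set.mem_setOf_eq]
    rw [memiff y, hQw]
    constructor
    · intro hyD
      refine ⟨y - Q w, ?_, by abel⟩
      have : y - Q w = (y - w) + (w - Q w) := by abel
      rw [this]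
      exact D.add_mem hyD (Qsub w)
    · rintro ⟨d, hd, rfl⟩
      have : Q w + d - w = d - (w - Q w) := by abel
      rw [this]
      exact D.sub_mem hd (Qsub w)
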